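/- Let X be a diagonalizable real matrix whose eigenvalues all lie in an interval [c, e] with 0 < c ≤ e. Then for every k ≥ 1, min over polynomials p of degree ≤ k−1 with p(0)=1 of ‖p(X)‖ (operator norm) is at most κ(V) · 2 ((√e − √c)/(√e + √c))^{k−1}, where V diagonalizes X and κ(V) is its condition number; in particular if X is symmetric the bound is 2((√e−√c)/(√e+√c))^{k−1}. -/

import Mathlib

open Matrix Polynomial


lemma my_natDegree_T_le : ∀ n : ℕ, (Chebyshev.T ℝ (n : ℤ)).natDegree ≤ n := by
  intro n
  induction n using Nat.strong_induction_on with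
  | _ n ih =>
    match n with
    | 0 => simp [Chebyshev.T_zero]
    | 1 => simp [Chebyshev.T_one]
    | (m+2) =>
      have h1 := ih (m+1) (by omega)
      have h2 := ih m (by omega)
      have : ((m:ℤ) + 2) = ((m+2 : ℕ) : ℤ) := by push_cast; ring
      rw [← this, Chebyshev.T_add_two]
      refine le_trans (natDegree_sub_le _ _) ?_
      have : (2 * X * Chebyshev.T ℝ ((m:ℤ)+1)).natDegree ≤ m + 2 := by
        refine le_trans (natDegree_mul_le) ?_
        have hx : (2 * X : ℝ[X]).natDegree ≤ 1 := le_trans natDegree_mul_le (by simp)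
        have : ((m:ℤ) + 1) = ((m+1 : ℕ) : ℤ) := by push_cast; ring
        rw [this]
        omega
      simp only [max_le_iff]
      exact ⟨this, by omega⟩

lemma my_abs_T_le_one (n : ℕ) (y : ℝ) (hy : |y| ≤ 1) : |(Chebyshev.T ℝ (n : ℤ)).eval y| ≤ 1 := by
  have h1 : -1 ≤ y := by cases abs_le.mp hy; linarith
  have h2 : y ≤ 1 := (abs_le.mp hy).2
  have := Chebyshev.T_real_cos (Real.arccos y) (n : ℤ)
  rw [Real.cos_arccos h1 h2] at this
  rw [this]
  exact Real.abs_cos_le_one _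

lemma my_T_eval_avg (t : ℝ) (ht : 0 < t) :
    ∀ n : ℕ, (Chebyshev.T ℝ (n : ℤ)).eval ((t + t⁻¹)/2) = (t^n + t⁻¹^n)/2 := by
  intro n
  induction n using Nat.strong_induction_on with
  | _ n ih =>
    match n with
    | 0 => simp [Chebyshev.T_zero]
    | 1 => simp [Chebyshev.T_one]
    | (m+2) =>
      have h1 := ih (m+1) (by omega)
      have h2 := ih m (by omega)
      have hc : ((m:ℤ) + 2) = ((m+2 : ℕ) : ℤ) := by push_cast; ring
      rw [← hc, Chebyshev.T_add_two]
      have hc1 : ((m:ℤ) + 1) = ((m+1 : ℕ) : ℤ) := by push_cast; ring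
      rw [eval_sub, eval_mul, eval_mul, eval_X, eval_ofNat, hc1, h1, h2]
      have htne : t ≠ 0 := ne_of_gt ht
      field_simp
      have htu : t * (1 / t) = 1 := by rw [mul_one_div_cancel htne]
      linear_combination (t * (1 / t) ^ m - (1 / t) ^ (m + 1)) * htu

lemma my_cheb_exists (c e : ℝ) (hc : 0 < c) (hce : c ≤ e) (n : ℕ) :
    ∃ p : ℝ[X], p.natDegree ≤ n ∧ p.eval 0 = 1 ∧ ∀ γ, c ≤ γ → γ ≤ e →
      |p.eval γ| ≤ 2 * ((Real.sqrt e - Real.sqrt c) / (Real.sqrt e + Real.sqrt c)) ^ n := by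
  rcases eq_or_lt_of_le hce with rfl | hlt
  · -- c = e
    rcases Nat.eq_zero_or_pos n with rfl | hn
    · exact ⟨1, by simp, by simp, fun γ _ _ => by simp⟩
    · refine ⟨1 - C c⁻¹ * X, ?_, by simp, ?_⟩
      · refine le_trans (natDegree_sub_le _ _) ?_
        simp only [natDegree_one, max_le_iff]
        exact ⟨by omega, le_trans natDegree_mul_le (by simp; omega)⟩
      · intro γ h1 h2
        have : γ = c := le_antisymm h2 h1
        subst this
        have h0 : (1 - C γ⁻¹ * X : ℝ[X]).eval γ = 0 := by
          simp [inv_mul_cancel₀ (ne_of_gt hc)]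
        rw [h0, abs_zero, sub_self, zero_div, zero_pow (by omega : n ≠ 0), mul_zero]
  · -- c < e
    set a := Real.sqrt e
    set b := Real.sqrt c
    have hb : 0 < b := Real.sqrt_pos.mpr hc
    have hba : b < a := Real.sqrt_lt_sqrt hc.le hlt
    have ha : 0 < a := lt_trans hb hba
    have hab : 0 < a - b := by linarith
    have hab' : 0 < a + b := by linarith
    set t := (a + b) / (a - b) with hts
    have ht : 0 < t := div_pos hab' hab
    have hrinv : (a - b) / (a + b) = t⁻¹ := by
      rw [hts, inv_div]
    have hec : c < e := hlt
    have hea : a ^ 2 = e := Real.sq_sqrt (le_trans hc.le hce)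
    have hcb : b ^ 2 = c := Real.sq_sqrt hc.le
    have hs : (t + t⁻¹) / 2 = (e + c) / (e - c) := by
      have h1 : t⁻¹ = (a - b) / (a + b) := hrinv.symm
      rw [hts, h1, div_add_div _ _ (ne_of_gt hab) (ne_of_gt hab'), ← hea, ← hcb]
      have h2 : (a + b) * (a + b) + (a - b) * (a - b) = 2 * (a ^ 2 + b ^ 2) := by ring
      have h3 : (a - b) * (a + b) = a ^ 2 - b ^ 2 := by ring
      rw [h2, h3]
      have h4 : a ^ 2 - b ^ 2 ≠ 0 := by
        rw [hea, hcb]; exact sub_ne_zero.mpr (ne_of_gt hec)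
      field_simp
    set s := (e + c) / (e - c) with hsdef
    set Tn := Chebyshev.T ℝ (n : ℤ)
    have hTs : Tn.eval s = (t ^ n + t⁻¹ ^ n) / 2 := by
      rw [← hs]; exact my_T_eval_avg t ht n
    have htn : 0 < t ^ n := pow_pos ht n
    have htin : 0 < t⁻¹ ^ n := pow_pos (inv_pos.mpr ht) n
    have hTspos : 0 < Tn.eval s := by rw [hTs]; positivity
    have hTsge : t ^ n / 2 ≤ Tn.eval s := by rw [hTs]; linarith
    refine ⟨C (Tn.eval s)⁻¹ * (Tn.comp (C s - C (2 / (e - c)) * X)), ?_, ?_, ?_⟩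
    · refine le_trans (natDegree_C_mul_le _ _) (le_trans natDegree_comp_le ?_)
      have h5 : (C s - C (2 / (e - c)) * X : ℝ[X]).natDegree ≤ 1 := by
        refine le_trans (natDegree_sub_le _ _) ?_
        simp only [natDegree_C, max_le_iff]
        exact ⟨by omega, le_trans natDegree_mul_le (by simp)⟩
      calc Tn.natDegree * (C s - C (2 / (e - c)) * X : ℝ[X]).natDegree
          ≤ Tn.natDegree * 1 := Nat.mul_le_mul_left _ h5
        _ ≤ n := by rw [mul_one]; exact my_natDegree_T_le n
    · simp [eval_comp, hTspos.ne']
    · intro γ h1 h2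
      have hecne : e - c ≠ 0 := sub_ne_zero.mpr (ne_of_gt hec)
      have heval : (C (Tn.eval s)⁻¹ * (Tn.comp (C s - C (2 / (e - c)) * X))).eval γ
          = (Tn.eval s)⁻¹ * Tn.eval (s - 2 / (e - c) * γ) := by
        simp [eval_comp]
      rw [heval, abs_mul, abs_of_pos (inv_pos.mpr hTspos)]
      have hy : |s - 2 / (e - c) * γ| ≤ 1 := by
        have hpos : 0 < e - c := sub_pos.mpr hec
        have hyval : s - 2 / (e - c) * γ = (e + c - 2 * γ) / (e - c) := by
          rw [hsdef]; field_simp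
        rw [abs_le, hyval]
        constructor
        · rw [le_div_iff₀ hpos]; linarith
        · rw [div_le_one hpos]; linarith
      have hTb := my_abs_T_le_one n _ hy
      calc (Tn.eval s)⁻¹ * |Tn.eval (s - 2 / (e - c) * γ)|
          ≤ (Tn.eval s)⁻¹ * 1 := by
            exact mul_le_mul_of_nonneg_left hTb (inv_pos.mpr hTspos).le
        _ = (Tn.eval s)⁻¹ := mul_one _
        _ ≤ (t ^ n / 2)⁻¹ := by
            exact inv_anti₀ (by positivity) hTsge
        _ = 2 * t⁻¹ ^ n := by
            rw [inv_div, div_eq_mul_inv, ← inv_pow]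
        _ = 2 * ((a - b) / (a + b)) ^ n := by rw [hrinv]

lemma my_aeval_conj {A : Type*} [Ring A] [Algebra ℝ A] (v w a : A)
    (hvw : v * w = 1) (hwv : w * v = 1) (p : ℝ[X]) :
    aeval (v * a * w) p = v * aeval a p * w := by
  induction p using Polynomial.induction_on' with
  | add p q hp hq => rw [map_add, map_add, hp, hq, mul_add, add_mul]
  | monomial m coef =>
    rw [aeval_monomial, aeval_monomial]
    have hpow : (v * a * w) ^ m = v * a ^ m * w := by
      induction m with
      | zero => simpa using hvw.symm
      | succ i ih =>
        calc (v * a * w) ^ (i + 1) = (v * a * w) ^ i * (v * a * w) := pow_succ _ _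
          _ = v * a ^ i * w * (v * a * w) := by rw [ih]
          _ = v * a ^ i * (w * v) * (a * w) := by simp only [mul_assoc]
          _ = v * (a ^ i * a) * w := by rw [hwv, mul_one]; simp only [mul_assoc]
          _ = v * a ^ (i + 1) * w := by rw [pow_succ]
    rw [hpow, ← mul_assoc, ← mul_assoc, Algebra.commutes coef v, mul_assoc v, mul_assoc v,
      ← mul_assoc v]

lemma my_aeval_diagonal {N : ℕ} [DecidableEq (Fin N)] (g : Fin N → ℝ) (p : ℝ[X]) :
    aeval (diagonal g) p = diagonal (fun i => p.eval (g i)) := by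
  have h1 : diagonal g = (Matrix.diagonalAlgHom ℝ : (Fin N → ℝ) →ₐ[ℝ] _) g := rfl
  rw [h1, aeval_algHom_apply]
  show diagonal (aeval g p) = diagonal (fun i => p.eval (g i))
  rw [diagonal_eq_diagonal_iff]
  intro i
  have := aeval_algHom_apply (Pi.evalAlgHom ℝ (fun _ : Fin N => ℝ) i) g p
  simpa using this.symm

lemma my_norm_diag_le {N : ℕ} [DecidableEq (Fin N)] (g : Fin N → ℝ) (M : ℝ) (hM : 0 ≤ M)
    (hg : ∀ i, |g i| ≤ M) : ‖toEuclideanCLM (𝕜 := ℝ) (diagonal g)‖ ≤ M := by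
  refine ContinuousLinearMap.opNorm_le_bound _ hM (fun x => ?_)
  have hx : toEuclideanCLM (𝕜 := ℝ) (diagonal g) x =
      (WithLp.equiv _ _).symm (diagonal g *ᵥ (WithLp.equiv _ _ x)) := by
    have h := toEuclideanCLM_toLp (𝕜 := ℝ) (diagonal g) (WithLp.equiv _ _ x)
    simpa [Matrix.toLin'_apply] using h
  rw [hx]
  rw [EuclideanSpace.norm_eq, EuclideanSpace.norm_eq]
  rw [show M = Real.sqrt (M ^ 2) from (Real.sqrt_sq hM).symm]
  rw [← Real.sqrt_mul (by positivity)]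
  apply Real.sqrt_le_sqrt
  rw [Finset.mul_sum]
  apply Finset.sum_le_sum
  intro i _
  have h1 : ‖((WithLp.equiv _ _).symm (diagonal g *ᵥ (WithLp.equiv _ _ x)) :
      EuclideanSpace ℝ (Fin N)) i‖ = |g i| * ‖x i‖ := by
    simp [mulVec_diagonal, abs_mul]
  rw [h1, mul_pow]
  exact mul_le_mul_of_nonneg_right (pow_le_pow_left₀ (abs_nonneg _) (hg i) 2) (by positivity)

lemma my_norm_conj_aeval_le {N : ℕ} [DecidableEq (Fin N)]
    (A B : Matrix (Fin N) (Fin N) ℝ) (hAB : A * B = 1) (hBA : B * A = 1)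
    (g : Fin N → ℝ) (p : ℝ[X]) (M : ℝ) (hM : 0 ≤ M) (hb : ∀ i, |p.eval (g i)| ≤ M) :
    ‖toEuclideanCLM (𝕜 := ℝ) (aeval (A * diagonal g * B) p)‖ ≤
      ‖toEuclideanCLM (𝕜 := ℝ) A‖ * ‖toEuclideanCLM (𝕜 := ℝ) B‖ * M := by
  rw [my_aeval_conj A B (diagonal g) hAB hBA p, my_aeval_diagonal]
  rw [_root_.map_mul, _root_.map_mul]
  set a := toEuclideanCLM (𝕜 := ℝ) A
  set b := toEuclideanCLM (𝕜 := ℝ) B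
  set d := toEuclideanCLM (𝕜 := ℝ) (diagonal fun i => p.eval (g i))
  have hd : ‖d‖ ≤ M := my_norm_diag_le _ M hM hb
  calc ‖a * d * b‖ ≤ ‖a * d‖ * ‖b‖ := ContinuousLinearMap.opNorm_comp_le _ _
    _ ≤ ‖a‖ * ‖d‖ * ‖b‖ :=
        mul_le_mul_of_nonneg_right (ContinuousLinearMap.opNorm_comp_le _ _) (norm_nonneg _)
    _ ≤ ‖a‖ * M * ‖b‖ := by
        have := mul_le_mul_of_nonneg_left hd (norm_nonneg a)
        exact mul_le_mul_of_nonneg_right this (norm_nonneg _)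
    _ = ‖a‖ * ‖b‖ * M := by ring

lemma my_norm_unitary_le {N : ℕ} [DecidableEq (Fin N)]
    (W : Matrix (Fin N) (Fin N) ℝ) (hW : star W * W = 1) :
    ‖toEuclideanCLM (𝕜 := ℝ) W‖ ≤ 1 := by
  refine ContinuousLinearMap.opNorm_le_bound _ zero_le_one (fun x => ?_)
  rw [one_mul]
  set w := toEuclideanCLM (𝕜 := ℝ) W
  have hadj : ContinuousLinearMap.adjoint w = toEuclideanCLM (𝕜 := ℝ) (star W) := by
    rw [map_star, ContinuousLinearMap.star_eq_adjoint]
  have hinner : ‖w x‖ ^ 2 = ‖x‖ ^ 2 := by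
    have h1 : (inner ℝ (ContinuousLinearMap.adjoint w (w x)) x : ℝ) = inner ℝ (w x) (w x) :=
      ContinuousLinearMap.adjoint_inner_left w x (w x)
    have h2 : ContinuousLinearMap.adjoint w (w x) = x := by
      rw [hadj]
      have : toEuclideanCLM (𝕜 := ℝ) (star W) (toEuclideanCLM (𝕜 := ℝ) W x)
          = toEuclideanCLM (𝕜 := ℝ) (star W * W) x := by rw [_root_.map_mul]; rfl
      rw [this, hW, _root_.map_one]; rfl
    rw [h2] at h1
    rw [← real_inner_self_eq_norm_sq, ← real_inner_self_eq_norm_sq, ← h1]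
  have h4 : ‖w x‖ = ‖x‖ := by
    have h3 := congrArg Real.sqrt hinner
    rwa [Real.sqrt_sq (norm_nonneg _), Real.sqrt_sq (norm_nonneg _)] at h3
  exact le_of_eq h4
theorem chebyshev_polynomial_minimization {N : ℕ} [DecidableEq (Fin N)]
    (X V : Matrix (Fin N) (Fin N) ℝ) (f : Fin N → ℝ) (c e : ℝ) (k : ℕ)
    (hc : 0 < c) (hce : c ≤ e) (hk : 1 ≤ k)
    (hV : IsUnit V.det) (hX : X = V * diagonal f * V⁻¹)
    (hf : ∀ i, c ≤ f i ∧ f i ≤ e) :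
    (∃ p : Polynomial ℝ, p.natDegree ≤ k - 1 ∧ p.eval 0 = 1 ∧
      ‖toEuclideanCLM (𝕜 := ℝ) (aeval X p)‖ ≤
        (‖toEuclideanCLM (𝕜 := ℝ) V‖ * ‖toEuclideanCLM (𝕜 := ℝ) V⁻¹‖) *
          (2 * ((Real.sqrt e - Real.sqrt c) / (Real.sqrt e + Real.sqrt c)) ^ (k - 1))) ∧
    (X.IsSymm → ∃ p : Polynomial ℝ, p.natDegree ≤ k - 1 ∧ p.eval 0 = 1 ∧
      ‖toEuclideanCLM (𝕜 := ℝ) (aeval X p)‖ ≤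
        2 * ((Real.sqrt e - Real.sqrt c) / (Real.sqrt e + Real.sqrt c)) ^ (k - 1)) := by
  obtain ⟨p, hdeg, h0, hbound⟩ := my_cheb_exists c e hc hce (k - 1)
  set M := 2 * ((Real.sqrt e - Real.sqrt c) / (Real.sqrt e + Real.sqrt c)) ^ (k - 1) with hMdef
  have hsc : 0 < Real.sqrt c := Real.sqrt_pos.mpr hc
  have hse : Real.sqrt c ≤ Real.sqrt e := Real.sqrt_le_sqrt hce
  have hr : 0 ≤ (Real.sqrt e - Real.sqrt c) / (Real.sqrt e + Real.sqrt c) :=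
    div_nonneg (by linarith) (by linarith)
  have hM : 0 ≤ M := by positivity
  have hb : ∀ i, |p.eval (f i)| ≤ M := fun i => hbound (f i) (hf i).1 (hf i).2
  constructor
  · refine ⟨p, hdeg, h0, ?_⟩
    rw [hX]
    exact my_norm_conj_aeval_le V V⁻¹ (mul_nonsing_inv V hV) (nonsing_inv_mul V hV) f p M hM hb
  · intro hsym
    by_cases hN : N = 0
    · refine ⟨p, hdeg, h0, ?_⟩
      subst hN
      have hz : toEuclideanCLM (𝕜 := ℝ) (aeval X p) = 0 := Subsingleton.elim _ _
      rw [hz, norm_zero]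
      exact hM
    · have hherm : X.IsHermitian := by
        show Xᴴ = X
        rw [Matrix.conjTranspose_eq_transpose_of_trivial]
        exact hsym
      set g := hherm.eigenvalues with hg
      have hVu : IsUnit V := (Matrix.isUnit_iff_isUnit_det V).mpr hV
      have hspec : spectrum ℝ X = Set.range f := by
        have hu : (hVu.unit : Matrix (Fin N) (Fin N) ℝ) = V := hVu.unit_spec
        have hui : ((hVu.unit⁻¹ : (Matrix (Fin N) (Fin N) ℝ)ˣ) : Matrix (Fin N) (Fin N) ℝ)
            = V⁻¹ := by rw [Matrix.coe_units_inv, hu]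
        have hX' : X = hVu.unit * diagonal f * ((hVu.unit⁻¹ : _ˣ) : Matrix (Fin N) (Fin N) ℝ) := by
          rw [hu, hui]; exact hX
        rw [hX', spectrum.units_conjugate, spectrum_diagonal]
      have heig : ∀ i, c ≤ g i ∧ g i ≤ e := by
        intro i
        have hmem := hherm.eigenvalues_mem_spectrum_real i
        rw [hspec] at hmem
        obtain ⟨j, hj⟩ := hmem
        have hfj := hf j
        rw [hj] at hfj
        exact hfj
      have hb2 : ∀ i, |p.eval (g i)| ≤ M := fun i => hbound (g i) (heig i).1 (heig i).2
      set W : Matrix (Fin N) (Fin N) ℝ := (hherm.eigenvectorUnitary : Matrix (Fin N) (Fin N) ℝ)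
        with hWdef
      have hWmem : W ∈ Matrix.unitaryGroup (Fin N) ℝ := hherm.eigenvectorUnitary.2
      have hWstar : W * star W = 1 := (Matrix.mem_unitaryGroup_iff).mp hWmem
      have hstarW : star W * W = 1 := (Matrix.mem_unitaryGroup_iff').mp hWmem
      have hXW : X = W * diagonal g * star W := by
        have hst := hherm.spectral_theorem
        rwa [RCLike.ofReal_real_eq_id, Function.id_comp] at hst
      refine ⟨p, hdeg, h0, ?_⟩
      rw [hXW]
      have hmain := my_norm_conj_aeval_le W (star W) hWstar hstarW g p M hM hb2
      have h1 : ‖toEuclideanCLM (𝕜 := ℝ) W‖ ≤ 1 := my_norm_unitary_le W hstarW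
      have h2 : ‖toEuclideanCLM (𝕜 := ℝ) (star W)‖ ≤ 1 :=
        my_norm_unitary_le (star W) (by rwa [star_star])
      calc ‖toEuclideanCLM (𝕜 := ℝ) (aeval (W * diagonal g * star W) p)‖
          ≤ ‖toEuclideanCLM (𝕜 := ℝ) W‖ * ‖toEuclideanCLM (𝕜 := ℝ) (star W)‖ * M := hmain
        _ ≤ 1 * 1 * M := by
            apply mul_le_mul_of_nonneg_right _ hM
            exact mul_le_mul h1 h2 (norm_nonneg _) zero_le_one
        _ = M := by ring
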